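/- Let k = (k₁,…,k_r) be an admissible index with r ≥ 1 and let t ∈ ℝ with |t| < 1. Then the Hurwitz-type multiple zeta series ∑_{0<n₁<⋯<n_r} ∏_{i=1}^{r} (n_i + t)^{−k_i} converges, the family (over n = (n₁,…,n_r) ∈ ℤ_{≥0}^r) with members (∏_{i=1}^{r} C(k_i+n_i−1, n_i))·ζ(k⊕n)·(−t)^{n₁+⋯+n_r} is absolutely summable, and the two sums are equal: ∑_{0<m₁<⋯<m_r} ∏_i (m_i+t)^{−k_i} = ∑_{n∈ℤ_{≥0}^r} (∏_i C(k_i+n_i−1, n_i))·ζ(k⊕n)·(−t)^{n₁+⋯+n_r}. -/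

import Mathlib

/- STATEMENT 12: for an admissible index k (r ≥ 1) and |t| < 1, the Hurwitz-type series
∑_{0<n₁<⋯<n_r} ∏ (n_i+t)^{-k_i} converges, the family
(∏ C(k_i+n_i−1,n_i)) ζ(k⊕n) (−t)^{|n|} over n ∈ ℤ_{≥0}^r is absolutely summable, and
the two sums agree. -/

noncomputable section

/-- The multiple zeta value of an index (as a `tsum`, which equals the sum of the
convergent series when the index is admissible). -/
def mzv (k : List ℕ) : ℝ :=
  ∑' n : {f : Fin k.length → ℕ // StrictMono f ∧ ∀ i, 0 < f i},
    ∏ i, ((n.1 i : ℝ) ^ k.get i)⁻¹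



open Finset

lemma my_tail_summable {c : ℝ} (hc : 1 ≤ c) {a : ℕ} (ha : 2 ≤ a) :
    Summable (fun g : ℕ => ((c + g) ^ a)⁻¹) := by
  have hbase : Summable (fun g : ℕ => ((1 + (g : ℝ)) ^ 2)⁻¹) := by
    have h := (summable_nat_add_iff 1).mpr (Real.summable_one_div_nat_pow.mpr (by norm_num : 1 < 2))
    refine h.congr fun g => ?_
    push_cast
    rw [one_div]
    ring_nf
  refine hbase.of_nonneg_of_le (fun g => by positivity) (fun g => ?_)
  have h0 : (1:ℝ) + g ≤ c + g := by linarith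
  have h1 : (1 + (g:ℝ))^2 ≤ (c+g)^a := by
    calc (1 + (g:ℝ))^2 ≤ (c+g)^2 := by
          apply pow_le_pow_left₀ (by positivity) h0
      _ ≤ (c+g)^a := by
          apply pow_le_pow_right₀ (by linarith [Nat.cast_nonneg (α := ℝ) g]) ha
  exact inv_anti₀ (by positivity) h1

lemma my_tail_bound {c : ℝ} (hc : 1 ≤ c) {a : ℕ} (ha : 2 ≤ a) :
    ∑' g : ℕ, ((c + g) ^ a)⁻¹ ≤ 2 / c := by
  apply (my_tail_summable hc ha).tsum_le_of_sum_le
  intro s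
  obtain ⟨N, hN⟩ := s.exists_nat_subset_range
  have hterm : ∀ g : ℕ, ((c + g) ^ a)⁻¹ ≤ 2/(c+g) - 2/(c+g+1) := by
    intro g
    have hg0 : (0:ℝ) ≤ g := Nat.cast_nonneg g
    have hx : (1:ℝ) ≤ c + g := by linarith
    have hxpos : (0:ℝ) < c + g := by linarith
    have heq : 2/(c+g) - 2/(c+g+1) = 2/((c+g)*(c+g+1)) := by
      field_simp
      ring
    rw [heq, inv_eq_one_div, div_le_div_iff₀ (by positivity) (by positivity)]
    have hpow : (c+g)^2 ≤ (c+g)^a := pow_le_pow_right₀ hx ha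
    nlinarith [hpow]
  calc ∑ g ∈ s, ((c + g) ^ a)⁻¹ ≤ ∑ g ∈ range N, ((c + g) ^ a)⁻¹ :=
        sum_le_sum_of_subset_of_nonneg hN (fun g _ _ => by positivity)
    _ ≤ ∑ g ∈ range N, (2/(c+g) - 2/(c+g+1)) := sum_le_sum (fun g _ => hterm g)
    _ = 2/c - 2/(c+N) := by
        have := Finset.sum_range_sub' (fun g : ℕ => 2/(c+g)) N
        simp only [Nat.cast_zero, add_zero] at this
        rw [← this]
        apply Finset.sum_congr rfl
        intro i _
        push_cast
        ring_nf
    _ ≤ 2 / c := by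
        have : (0:ℝ) < c + N := by have := Nat.cast_nonneg (α := ℝ) N; linarith
        have : (0:ℝ) ≤ 2/(c+N) := by positivity
        linarith

def nval {r : ℕ} (g : Fin r → ℕ) (i : Fin r) : ℕ :=
  (i : ℕ) + 1 + ∑ j : Fin r, if (j : ℕ) ≤ (i : ℕ) then g j else 0

lemma nval_zero {r : ℕ} (g : Fin (r+1) → ℕ) : nval g 0 = 1 + g 0 := by
  unfold nval
  rw [Fin.sum_univ_succ]
  simp [Fin.val_succ]

lemma nval_succ {r : ℕ} (g : Fin (r+1) → ℕ) (i : Fin r) :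
    nval g i.succ = (1 + g 0) + nval (g ∘ Fin.succ) i := by
  unfold nval
  rw [Fin.sum_univ_succ]
  simp only [Fin.val_succ, Fin.val_zero, Nat.zero_le, if_true, Function.comp_apply,
    Nat.add_le_add_iff_right]
  omega

noncomputable def Ffun {r : ℕ} (c : ℝ) (K : Fin r → ℕ) (g : Fin r → ℕ) : ℝ :=
  ∏ i, ((c + (nval g i : ℝ)) ^ K i)⁻¹

lemma Ffun_nonneg {r : ℕ} {c : ℝ} (hc : 0 ≤ c) (K : Fin r → ℕ) (g : Fin r → ℕ) :
    0 ≤ Ffun c K g := by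
  apply Finset.prod_nonneg
  intro i _
  have : (0:ℝ) ≤ nval g i := Nat.cast_nonneg _
  positivity

lemma Ffun_succ {r : ℕ} (c : ℝ) (K : Fin (r+1) → ℕ) (g : Fin (r+1) → ℕ) :
    Ffun c K g = ((c + (1 + g 0 : ℕ)) ^ K 0)⁻¹
      * Ffun (c + (1 + g 0 : ℕ)) (K ∘ Fin.succ) (g ∘ Fin.succ) := by
  unfold Ffun
  rw [Fin.prod_univ_succ]
  congr 1
  · rw [nval_zero]
  · apply Finset.prod_congr rfl
    intro i _
    simp only [Function.comp_apply]
    rw [nval_succ]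
    push_cast
    ring_nf

lemma Ffun_summable : ∀ (r : ℕ) (K : Fin (r+1) → ℕ), (∀ i, 1 ≤ K i) → 2 ≤ K (Fin.last r) →
    ∀ c : ℝ, 0 ≤ c → Summable (Ffun c K) ∧ ∑' g, Ffun c K g ≤ 2^(r+1) / (c+1) := by
  intro r
  induction r with
  | zero =>
    intro K h1 h2 c hc
    have hK0 : 2 ≤ K 0 := h2
    set e0 : ℕ ≃ (Fin 1 → ℕ) := (Equiv.funUnique (Fin 1) ℕ).symm with he0
    have he0app : ∀ a : ℕ, e0 a = fun _ => a := fun a => rfl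
    have hpt : ∀ a : ℕ, Ffun c K (e0 a) = ((c + 1 + a) ^ K 0)⁻¹ := by
      intro a
      unfold Ffun
      rw [Fin.prod_univ_one]
      have : nval (e0 a) 0 = 1 + a := by
        rw [nval_zero, he0app]
      rw [this]
      push_cast
      ring_nf
    have hs : Summable (fun a : ℕ => ((c + 1 + (a:ℝ)) ^ K 0)⁻¹) := by
      exact my_tail_summable (by linarith) hK0
    constructor
    · rw [← e0.summable_iff]
      exact hs.congr (fun a => (hpt a).symm)
    · rw [← e0.tsum_eq (Ffun c K), tsum_congr hpt]
      calc ∑' a : ℕ, ((c + 1 + (a:ℝ)) ^ K 0)⁻¹ ≤ 2 / (c+1) := my_tail_bound (by linarith) hK0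
        _ ≤ 2^(0+1)/(c+1) := by norm_num
  | succ r ih =>
    intro K h1 h2 c hc
    set K' : Fin (r+1) → ℕ := K ∘ Fin.succ with hK'
    have h1' : ∀ i, 1 ≤ K' i := fun i => h1 _
    have h2' : 2 ≤ K' (Fin.last r) := by
      have : Fin.succ (Fin.last r) = Fin.last (r+1) := Fin.succ_last r
      simpa [hK', this] using h2
    set E : (ℕ × (Fin (r+1) → ℕ)) ≃ (Fin (r+2) → ℕ) := Fin.consEquiv (fun _ => ℕ) with hE
    have hpt : ∀ p : ℕ × (Fin (r+1) → ℕ),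
        Ffun c K (E p) = ((c + (1 + p.1 : ℕ)) ^ K 0)⁻¹ * Ffun (c + (1 + p.1 : ℕ)) K' p.2 := by
      intro p
      rw [show E p = Fin.cons p.1 p.2 from rfl, Ffun_succ]
      have h0 : (Fin.cons p.1 p.2 : Fin (r+2) → ℕ) 0 = p.1 := rfl
      have hsucc : (Fin.cons p.1 p.2 : Fin (r+2) → ℕ) ∘ Fin.succ = p.2 := by
        funext i; simp
      rw [h0, hsucc]
    -- fiberwise summability and bound
    have hfiber : ∀ a : ℕ, Summable (fun g' => Ffun c K (E (a, g'))) := by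
      intro a
      have := (ih K' h1' h2' (c + (1 + a : ℕ)) (by positivity)).1
      exact ((this.mul_left (((c + (1 + a : ℕ)) ^ K 0)⁻¹)).congr
        (fun g' => (hpt (a, g')).symm))
    have hsumval : ∀ a : ℕ, ∑' g', Ffun c K (E (a, g'))
        ≤ 2^(r+1) * ((c + 1 + a) ^ (K 0 + 1))⁻¹ := by
      intro a
      have hih := ih K' h1' h2' (c + (1 + a : ℕ)) (by positivity)
      have hfun : (fun g' => Ffun c K (E (a, g')))
          = fun g' => ((c + (1 + a : ℕ)) ^ K 0)⁻¹ * Ffun (c + (1 + a : ℕ)) K' g' :=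
        funext fun g' => hpt (a, g')
      have heq : ∑' g', Ffun c K (E (a, g'))
          = ((c + (1 + a : ℕ)) ^ K 0)⁻¹ * ∑' g', Ffun (c + (1 + a : ℕ)) K' g' := by
        rw [hfun, tsum_mul_left]
      rw [heq]
      have hb := hih.2
      have hinv : (0:ℝ) ≤ ((c + (1 + a : ℕ)) ^ K 0)⁻¹ := by positivity
      have key : (c + (1+(a:ℝ)) + 1)⁻¹ ≤ (c + 1 + a)⁻¹ :=
        inv_anti₀ (by positivity) (by linarith)
      calc ((c + (1 + a : ℕ)) ^ K 0)⁻¹ * ∑' g', Ffun (c + (1 + a : ℕ)) K' g'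
          ≤ ((c + (1 + a : ℕ)) ^ K 0)⁻¹ * (2^(r+1) / (c + (1 + a : ℕ) + 1)) :=
            mul_le_mul_of_nonneg_left hb hinv
        _ = 2^(r+1) * (((c + 1 + (a:ℝ)) ^ K 0)⁻¹ * (c + (1+(a:ℝ)) + 1)⁻¹) := by
            push_cast
            rw [div_eq_mul_inv]
            ring
        _ ≤ 2^(r+1) * (((c + 1 + (a:ℝ)) ^ K 0)⁻¹ * (c + 1 + (a:ℝ))⁻¹) := by
            gcongr
        _ = 2^(r+1) * ((c + 1 + (a:ℝ)) ^ (K 0 + 1))⁻¹ := by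
            rw [pow_succ (c + 1 + (a:ℝ)) (K 0), mul_inv]
    have hdom : Summable (fun a : ℕ => 2^(r+1) * ((c + 1 + (a:ℝ)) ^ (K 0 + 1))⁻¹) :=
      (my_tail_summable (by linarith) (by have := h1 0; omega)).mul_left _
    have hnn : ∀ p : ℕ × (Fin (r+1) → ℕ), 0 ≤ Ffun c K (E p) := by
      intro p; exact Ffun_nonneg hc K (E p)
    have hsum2 : Summable (fun a : ℕ => ∑' g', Ffun c K (E (a, g'))) := by
      apply hdom.of_nonneg_of_le
      · intro a; exact tsum_nonneg (fun g' => hnn (a, g'))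
      · intro a; exact hsumval a
    have hprod : Summable (fun p : ℕ × (Fin (r+1) → ℕ) => Ffun c K (E p)) := by
      exact (summable_prod_of_nonneg hnn).mpr ⟨hfiber, hsum2⟩
    constructor
    · exact E.summable_iff.mp hprod
    · rw [← E.tsum_eq (Ffun c K), Summable.tsum_prod' hprod hfiber]
      calc ∑' a : ℕ, ∑' g', Ffun c K (E (a, g'))
          ≤ ∑' a : ℕ, 2^(r+1) * ((c + 1 + (a:ℝ)) ^ (K 0 + 1))⁻¹ :=
            Summable.tsum_le_tsum hsumval hsum2 hdom
        _ = 2^(r+1) * ∑' a : ℕ, ((c + 1 + (a:ℝ)) ^ (K 0 + 1))⁻¹ := tsum_mul_left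
        _ ≤ 2^(r+1) * (2 / (c+1)) := by
            apply mul_le_mul_of_nonneg_left _ (by positivity)
            exact my_tail_bound (by linarith) (by have := h1 0; omega)
        _ = 2^(r+1+1)/(c+1) := by ring

lemma nval_val_zero {r : ℕ} (g : Fin r → ℕ) (i : Fin r) (h : (i:ℕ) = 0) :
    nval g i = 1 + g i := by
  unfold nval
  have hsum : ∑ j : Fin r, (if (j : ℕ) ≤ (i : ℕ) then g j else 0) = g i := by
    rw [show (∑ j : Fin r, if (j : ℕ) ≤ (i : ℕ) then g j else 0)
        = ∑ j : Fin r, if j = i then g j else 0 from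
      Finset.sum_congr rfl (fun j _ => by
        congr 1
        simp only [eq_iff_iff]
        constructor
        · intro hj; exact Fin.ext (by omega)
        · intro hj; subst hj; omega)]
    simp
  omega

lemma nval_val_succ {r : ℕ} (g : Fin r → ℕ) (i : Fin r) (m : ℕ) (h : (i:ℕ) = m + 1) :
    nval g i = nval g ⟨m, by omega⟩ + 1 + g i := by
  unfold nval
  have hsplit : ∀ j : Fin r, (if (j : ℕ) ≤ (i : ℕ) then g j else 0)
      = (if (j : ℕ) ≤ m then g j else 0) + (if j = i then g j else 0) := by
    intro j
    by_cases h1 : (j:ℕ) ≤ m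
    · have hne : j ≠ i := fun hj => by subst hj; omega
      rw [if_pos (by omega : (j:ℕ) ≤ (i:ℕ)), if_pos h1, if_neg hne]
      omega
    · by_cases h2 : j = i
      · subst h2
        rw [if_pos (le_refl _), if_neg h1, if_pos rfl]
        omega
      · have hni : ¬ ((j:ℕ) ≤ (i:ℕ)) := by
          intro hc
          exact h2 (Fin.ext (by omega))
        rw [if_neg hni, if_neg h1, if_neg h2]
    
  rw [Finset.sum_congr rfl (fun j _ => hsplit j), Finset.sum_add_distrib]
  have : ∑ j : Fin r, (if j = i then g j else 0) = g i := by simp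
  simp only [this, Fin.val_mk]
  omega

lemma nval_strictMono {r : ℕ} (g : Fin r → ℕ) : StrictMono (nval g) := by
  intro i j hij
  unfold nval
  have hval : (i:ℕ) < (j:ℕ) := hij
  have hsum : ∑ l : Fin r, (if (l : ℕ) ≤ (i : ℕ) then g l else 0)
      ≤ ∑ l : Fin r, (if (l : ℕ) ≤ (j : ℕ) then g l else 0) := by
    apply Finset.sum_le_sum
    intro l _
    by_cases h1 : (l:ℕ) ≤ (i:ℕ)
    · rw [if_pos h1, if_pos (by omega : (l:ℕ) ≤ (j:ℕ))]
    · rw [if_neg h1]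
      exact Nat.zero_le _
  omega

lemma nval_pos {r : ℕ} (g : Fin r → ℕ) (i : Fin r) : 0 < nval g i := by
  unfold nval; omega

/-- gaps of a strictly monotone positive tuple -/
def gap {r : ℕ} (f : Fin r → ℕ) (i : Fin r) : ℕ :=
  if h : (i:ℕ) = 0 then f i - 1 else f i - f ⟨(i:ℕ) - 1, by omega⟩ - 1

lemma gap_nval {r : ℕ} (g : Fin r → ℕ) : gap (nval g) = g := by
  funext i
  unfold gap
  by_cases h : (i:ℕ) = 0
  · rw [dif_pos h, nval_val_zero g i h]
    omega
  · rw [dif_neg h]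
    obtain ⟨m, hm⟩ : ∃ m, (i:ℕ) = m + 1 := ⟨(i:ℕ) - 1, by omega⟩
    rw [nval_val_succ g i m hm]
    have : ((i:ℕ) - 1) = m := by omega
    simp only [this]
    omega

lemma nval_gap {r : ℕ} (f : Fin r → ℕ) (hf : StrictMono f) (hpos : ∀ i, 0 < f i) :
    nval (gap f) = f := by
  funext i
  obtain ⟨m, hm⟩ : ∃ m, (i:ℕ) = m := ⟨(i:ℕ), rfl⟩
  induction m using Nat.strong_induction_on generalizing i with
  | _ m ih =>
    match m, hm with
    | 0, hm =>
      rw [nval_val_zero _ i hm]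
      unfold gap
      rw [dif_pos hm]
      have := hpos i
      omega
    | Nat.succ m', hm =>
      have hi' : ((⟨m', by omega⟩ : Fin r) : ℕ) = m' := rfl
      have hlt : (⟨m', by omega⟩ : Fin r) < i := by
        rw [Fin.lt_def]; omega
      have hIH := ih m' (by omega) ⟨m', by omega⟩ rfl
      rw [nval_val_succ (gap f) i m' hm, hIH]
      unfold gap
      rw [dif_neg (by omega : ¬ (i:ℕ) = 0)]
      have hmono := hf hlt
      have : ((i:ℕ) - 1) = m' := by omega
      simp only [this]
      omega

def gapEquiv (r : ℕ) : (Fin r → ℕ) ≃ {f : Fin r → ℕ // StrictMono f ∧ ∀ i, 0 < f i} where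
  toFun g := ⟨nval g, nval_strictMono g, nval_pos g⟩
  invFun f := gap f.1
  left_inv g := gap_nval g
  right_inv f := Subtype.ext (nval_gap f.1 f.2.1 f.2.2)

noncomputable def coef (a : ℕ) (s : ℝ) (m : ℝ) (n : ℕ) : ℝ :=
  ((a + n - 1).choose n : ℝ) * (-s) ^ n * ((m ^ (a + n))⁻¹)

lemma coef_hasSum {a : ℕ} (ha : 1 ≤ a) {m : ℝ} (hm : 1 ≤ m) {s : ℝ} (hs : |s| < 1) :
    HasSum (coef a s m) (((m + s) ^ a)⁻¹) := by
  have hm0 : (0:ℝ) < m := by linarith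
  set x : ℝ := -s / m with hx
  have habs : |x| < 1 := by
    rw [hx, abs_div, abs_neg]
    calc |s| / |m| ≤ |s| / 1 := by
          apply div_le_div_of_nonneg_left (abs_nonneg s) one_pos
          rw [abs_of_pos hm0]; exact hm
      _ < 1 := by simpa using hs
  have hxnorm : ‖x‖ < 1 := by rwa [Real.norm_eq_abs]
  have h := hasSum_choose_mul_geometric_of_norm_lt_one (𝕜 := ℝ) (a - 1) hxnorm
  have h2 := h.mul_left ((m ^ a)⁻¹)
  have hms : 0 < m + s := by
    have : -|s| ≤ s := neg_abs_le s
    linarith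
  have h1x : 1 - x = (m + s) / m := by
    rw [hx]; field_simp; ring
  convert h2 using 1
  · rfl
  · funext n
    unfold coef
    have hc : ((a + n - 1).choose n : ℝ) = ((n + (a-1)).choose (a-1) : ℝ) := by
      norm_cast
      rw [show a + n - 1 = n + (a - 1) by omega]
      rw [← Nat.choose_symm (by omega : a - 1 ≤ n + (a-1)), show n + (a-1) - (a-1) = n by omega]
    rw [hc]
    have hxpow : x ^ n = (-s) ^ n * (m ^ n)⁻¹ := by
      rw [hx, div_pow, div_eq_mul_inv]
    rw [hxpow, pow_add, mul_inv]
    ring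
  · have hma : (m:ℝ)^a ≠ 0 := by positivity
    have hmsa : (m+s)^a ≠ 0 := by positivity
    rw [h1x, div_pow, show a - 1 + 1 = a by omega, one_div, inv_div]
    field_simp

lemma coef_abs {a : ℕ} {m : ℝ} (hm : 0 < m) (s : ℝ) (n : ℕ) :
    |coef a s m n| = coef a (-|s|) m n := by
  unfold coef
  rw [neg_neg]
  simp [abs_mul, abs_pow, abs_inv, abs_of_pos hm]

lemma pi_prod : ∀ (r : ℕ) (f : Fin r → ℕ → ℝ), (∀ i, Summable fun n => |f i n|) →
    Summable (fun g : Fin r → ℕ => |∏ i, f i (g i)|) ∧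
    (∑' g : Fin r → ℕ, ∏ i, f i (g i)) = ∏ i, ∑' n, f i n := by
  intro r
  induction r with
  | zero =>
    intro f hf
    constructor
    · exact (hasSum_single (α := ℝ) (β := Fin 0 → ℕ) (f := fun g => |∏ i, f i (g i)|)
        (fun i => i.elim0) (fun b' hb' => absurd (Subsingleton.elim b' _) hb')).summable
    · rw [tsum_eq_single (fun i : Fin 0 => i.elim0)
        (fun b' hb' => absurd (Subsingleton.elim b' _) hb')]
      simp
  | succ r ih =>
    intro f hf
    obtain ⟨ihS, ihT⟩ := ih (fun i => f i.succ) (fun i => hf i.succ)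
    set T : (Fin r → ℕ) → ℝ := fun g => ∏ i, f i.succ (g i) with hT
    have hTnorm : Summable fun g => ‖T g‖ := by simpa [Real.norm_eq_abs] using ihS
    have h0 : Summable fun n => ‖f 0 n‖ := by simpa [Real.norm_eq_abs] using hf 0
    have hmul : Summable fun p : ℕ × (Fin r → ℕ) => ‖f 0 p.1 * T p.2‖ := h0.mul_norm hTnorm
    set E : (ℕ × (Fin r → ℕ)) ≃ (Fin (r+1) → ℕ) := Fin.consEquiv (fun _ => ℕ) with hE
    have hpt : ∀ p : ℕ × (Fin r → ℕ), (∏ i, f i ((E p) i)) = f 0 p.1 * T p.2 := by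
      intro p
      rw [show E p = Fin.cons p.1 p.2 from rfl, Fin.prod_univ_succ]
      simp [hT]
    constructor
    · rw [← E.summable_iff]
      refine hmul.congr fun p => ?_
      show ‖f 0 p.1 * T p.2‖ = |∏ i, f i ((E p) i)|
      rw [Real.norm_eq_abs, hpt p]
    · calc ∑' g : Fin (r+1) → ℕ, ∏ i, f i (g i)
          = ∑' p : ℕ × (Fin r → ℕ), ∏ i, f i ((E p) i) := (E.tsum_eq _).symm
        _ = ∑' p : ℕ × (Fin r → ℕ), f 0 p.1 * T p.2 := tsum_congr hpt
        _ = (∑' n, f 0 n) * ∑' g, T g := (tsum_mul_tsum_of_summable_norm h0 hTnorm).symm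
        _ = ∏ i, ∑' n, f i n := by
            rw [Fin.prod_univ_succ, ← ihT]

lemma term_summable {r : ℕ} (K : Fin r → ℕ) (hK : ∀ i, 1 ≤ K i)
    (m : Fin r → ℕ) (hm : ∀ i, 0 < m i) {s : ℝ} (hs : |s| < 1) :
    Summable (fun n : Fin r → ℕ => |∏ i, coef (K i) s ((m i : ℝ)) (n i)|) ∧
    (∑' n : Fin r → ℕ, ∏ i, coef (K i) s ((m i : ℝ)) (n i))
      = ∏ i, (((m i : ℝ) + s) ^ K i)⁻¹ := by
  have hm1 : ∀ i, (1:ℝ) ≤ (m i : ℝ) := fun i => by exact_mod_cast hm i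
  have habs : ∀ i, Summable (fun n => |coef (K i) s ((m i : ℝ)) n|) := by
    intro i
    have h2 : |(-|s|)| < 1 := by rwa [abs_neg, abs_abs]
    exact ((coef_hasSum (hK i) (hm1 i) h2).summable).congr
      (fun n => (coef_abs (by linarith [hm1 i]) s n).symm)
  obtain ⟨h1, h2⟩ := pi_prod r (fun i => coef (K i) s ((m i : ℝ))) habs
  exact ⟨h1, h2.trans (Finset.prod_congr rfl
    (fun i _ => (coef_hasSum (hK i) (hm1 i) hs).tsum_eq))⟩

lemma term_abs_tsum {r : ℕ} (K : Fin r → ℕ) (hK : ∀ i, 1 ≤ K i)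
    (m : Fin r → ℕ) (hm : ∀ i, 0 < m i) {s : ℝ} (hs : |s| < 1) :
    (∑' n : Fin r → ℕ, |∏ i, coef (K i) s ((m i : ℝ)) (n i)|)
      = ∏ i, (((m i : ℝ) - |s|) ^ K i)⁻¹ := by
  have hm1 : ∀ i, (1:ℝ) ≤ (m i : ℝ) := fun i => by exact_mod_cast hm i
  have h2 : |(-|s|)| < 1 := by rwa [abs_neg, abs_abs]
  have hpt : ∀ n : Fin r → ℕ, |∏ i, coef (K i) s ((m i : ℝ)) (n i)|
      = ∏ i, coef (K i) (-|s|) ((m i : ℝ)) (n i) := by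
    intro n
    rw [Finset.abs_prod]
    exact Finset.prod_congr rfl (fun i _ => coef_abs (by linarith [hm1 i]) s (n i))
  rw [tsum_congr hpt, (term_summable K hK m hm h2).2]
  apply Finset.prod_congr rfl
  intro i _
  rw [sub_eq_add_neg]

lemma subtype_summable {r : ℕ} (hr : 0 < r) (K : Fin r → ℕ) (hK : ∀ i, 1 ≤ K i)
    (hlast : 2 ≤ K ⟨r - 1, by omega⟩) :
    Summable (fun m : {f : Fin r → ℕ // StrictMono f ∧ ∀ i, 0 < f i} =>
      ∏ i, ((m.1 i : ℝ) ^ K i)⁻¹) := by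
  obtain ⟨r', rfl⟩ : ∃ r', r = r' + 1 := ⟨r - 1, by omega⟩
  rw [← (gapEquiv (r'+1)).summable_iff]
  have hlast' : 2 ≤ K (Fin.last r') := hlast
  apply ((Ffun_summable r' K hK hlast' 0 le_rfl).1).congr
  intro g
  show Ffun 0 K g = _
  unfold Ffun
  apply Finset.prod_congr rfl
  intro i _
  rw [zero_add]
  rfl

lemma mzv_ofFn {r : ℕ} (A : Fin r → ℕ) :
    mzv (List.ofFn A) = ∑' m : {f : Fin r → ℕ // StrictMono f ∧ ∀ i, 0 < f i},
      ∏ i, ((m.1 i : ℝ) ^ A i)⁻¹ := by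
  unfold mzv
  have h : (List.ofFn A).length = r := List.length_ofFn
  let e : Fin (List.ofFn A).length ≃ Fin r := finCongr h
  have hemono : ∀ i j : Fin (List.ofFn A).length, i < j → e i < e j :=
    fun i j hij => hij
  have hemono' : ∀ i j : Fin r, i < j → e.symm i < e.symm j :=
    fun i j hij => hij
  let E : {f : Fin r → ℕ // StrictMono f ∧ ∀ i, 0 < f i}
      ≃ {f : Fin (List.ofFn A).length → ℕ // StrictMono f ∧ ∀ i, 0 < f i} :=
  { toFun := fun f => ⟨f.1 ∘ e, fun i j hij => f.2.1 (hemono i j hij), fun i => f.2.2 _⟩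
    invFun := fun f => ⟨f.1 ∘ e.symm, fun i j hij => f.2.1 (hemono' i j hij), fun i => f.2.2 _⟩
    left_inv := fun f => Subtype.ext (funext fun i => congrArg f.1 (e.apply_symm_apply i))
    right_inv := fun f => Subtype.ext (funext fun i => congrArg f.1 (e.symm_apply_apply i)) }
  rw [← E.tsum_eq (fun x => ∏ i, ((x.1 i : ℝ) ^ (List.ofFn A).get i)⁻¹)]
  apply tsum_congr
  intro y
  show (∏ i, ((y.1 (e i) : ℝ) ^ (List.ofFn A).get i)⁻¹) = ∏ i, ((y.1 i : ℝ) ^ A i)⁻¹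
  apply Fintype.prod_equiv e
  intro i
  rw [List.get_ofFn]
  rfl

theorem stmt_12 (k : List ℕ) (hpos : ∀ x ∈ k, 0 < x) (hne : k ≠ [])
    (hadm : ∀ a, k.getLast? = some a → 2 ≤ a)
    (t : ℝ) (ht : |t| < 1) :
    Summable (fun n : {f : Fin k.length → ℕ // StrictMono f ∧ ∀ i, 0 < f i} =>
      ∏ i, (((n.1 i : ℝ) + t) ^ k.get i)⁻¹) ∧
    Summable (fun n : Fin k.length → ℕ =>
      (∏ i, (Nat.choose (k.get i + n i - 1) (n i) : ℝ))
        * mzv (List.ofFn fun i => k.get i + n i) * (-t) ^ (∑ i, n i)) ∧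
    (∑' n : {f : Fin k.length → ℕ // StrictMono f ∧ ∀ i, 0 < f i},
      ∏ i, (((n.1 i : ℝ) + t) ^ k.get i)⁻¹)
    = ∑' n : Fin k.length → ℕ,
        (∏ i, (Nat.choose (k.get i + n i - 1) (n i) : ℝ))
          * mzv (List.ofFn fun i => k.get i + n i) * (-t) ^ (∑ i, n i) := by
  classical
  have hr0 : 0 < k.length := List.length_pos_iff.mpr hne
  set K : Fin k.length → ℕ := fun i => k.get i with hKdef
  have hK1 : ∀ i, 1 ≤ K i := fun i => hpos _ (List.get_mem k i)
  have hlast : 2 ≤ K ⟨k.length - 1, by omega⟩ := by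
    have h1 : k.getLast? = some (k.getLast hne) := List.getLast?_eq_getLast hne
    have h2 := hadm _ h1
    rwa [List.getLast_eq_getElem hne] at h2
  set S := {f : Fin k.length → ℕ // StrictMono f ∧ ∀ i, 0 < f i} with hSdef
  set Φ : S × (Fin k.length → ℕ) → ℝ :=
    fun p => ∏ i, coef (K i) t ((p.1.1 i : ℝ)) (p.2 i) with hΦdef
  -- fiberwise absolute summability and values
  have hfib : ∀ m : S, Summable (fun n => |Φ (m, n)|) :=
    fun m => (term_summable K hK1 m.1 m.2.2 ht).1
  have hfibΦ : ∀ m : S, Summable (fun n => Φ (m, n)) := fun m => (hfib m).of_abs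
  have hval : ∀ m : S, (∑' n, Φ (m, n)) = ∏ i, (((m.1 i : ℝ) + t) ^ K i)⁻¹ :=
    fun m => (term_summable K hK1 m.1 m.2.2 ht).2
  have habs_val : ∀ m : S, (∑' n, |Φ (m, n)|) = ∏ i, (((m.1 i : ℝ) - |t|) ^ K i)⁻¹ :=
    fun m => term_abs_tsum K hK1 m.1 m.2.2 ht
  -- domination
  have ht1 : 0 < 1 - |t| := by linarith
  have hbound : ∀ m : S, (∏ i, (((m.1 i : ℝ) - |t|) ^ K i)⁻¹)
      ≤ (∏ i, ((1 - |t|) ^ K i)⁻¹) * ∏ i, ((m.1 i : ℝ) ^ K i)⁻¹ := by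
    intro m
    rw [← Finset.prod_mul_distrib]
    apply Finset.prod_le_prod
    · intro i _
      have h1 : (1:ℝ) ≤ (m.1 i : ℝ) := by exact_mod_cast m.2.2 i
      have : 0 < (m.1 i : ℝ) - |t| := by
        have := abs_nonneg t; linarith
      positivity
    · intro i _
      have h1 : (1:ℝ) ≤ (m.1 i : ℝ) := by exact_mod_cast m.2.2 i
      have hpos1 : 0 < (m.1 i : ℝ) - |t| := by have := abs_nonneg t; linarith
      rw [← mul_inv, ← mul_pow]
      apply inv_anti₀ (by positivity)
      apply pow_le_pow_left₀ (by positivity)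
      nlinarith [abs_nonneg t]
  have hS : Summable (fun m : S => ∏ i, ((m.1 i : ℝ) ^ K i)⁻¹) :=
    subtype_summable hr0 K hK1 hlast
  have hsums : Summable (fun m : S => ∑' n, |Φ (m, n)|) := by
    apply (hS.mul_left (∏ i, ((1 - |t|) ^ K i)⁻¹)).of_nonneg_of_le
    · intro m; exact tsum_nonneg (fun n => abs_nonneg _)
    · intro m; rw [habs_val m]; exact hbound m
  have habs : Summable (fun p : S × (Fin k.length → ℕ) => |Φ p|) :=
    (summable_prod_of_nonneg (fun p => abs_nonneg _)).mpr ⟨hfib, hsums⟩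
  have hΦs : Summable Φ := habs.of_abs
  have hΦswap : Summable (fun q : (Fin k.length → ℕ) × S => Φ q.swap) := hΦs.prod_symm
  have hfib2 : ∀ n : Fin k.length → ℕ, Summable (fun m : S => Φ (m, n)) :=
    fun n => hΦswap.prod_factor n
  -- inner sums over m
  have hinner : ∀ n : Fin k.length → ℕ, (∑' m : S, Φ (m, n)) =
      (∏ i, ((K i + n i - 1).choose (n i) : ℝ))
        * mzv (List.ofFn fun i => K i + n i) * (-t) ^ (∑ i, n i) := by
    intro n
    have hpt : ∀ m : S, Φ (m, n) =
        ((∏ i, ((K i + n i - 1).choose (n i) : ℝ)) * (-t) ^ (∑ i, n i)) *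
          ∏ i, ((m.1 i : ℝ) ^ (K i + n i))⁻¹ := by
      intro m
      show (∏ i, coef (K i) t ((m.1 i : ℝ)) (n i)) = _
      rw [← Finset.prod_pow_eq_pow_sum, ← Finset.prod_mul_distrib,
        ← Finset.prod_mul_distrib]
      apply Finset.prod_congr rfl
      intro i _
      unfold coef
      ring
    rw [tsum_congr hpt, tsum_mul_left, mzv_ofFn (fun i => K i + n i)]
    ring
  -- summability of the coefficient family
  have hsum2 : Summable (fun n : Fin k.length → ℕ =>
      (∏ i, ((K i + n i - 1).choose (n i) : ℝ))
        * mzv (List.ofFn fun i => K i + n i) * (-t) ^ (∑ i, n i)) := by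
    apply (hΦswap.prod).congr
    intro n
    exact hinner n
  refine ⟨?_, hsum2, ?_⟩
  · apply (hΦs.prod).congr
    intro m
    exact hval m
  · calc (∑' m : S, ∏ i, (((m.1 i : ℝ) + t) ^ K i)⁻¹)
        = ∑' m : S, ∑' n, Φ (m, n) := tsum_congr (fun m => (hval m).symm)
      _ = ∑' p : S × (Fin k.length → ℕ), Φ p := (Summable.tsum_prod' hΦs hfibΦ).symm
      _ = ∑' q : (Fin k.length → ℕ) × S, Φ q.swap :=
          ((Equiv.prodComm (Fin k.length → ℕ) S).tsum_eq Φ).symm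
      _ = ∑' n : Fin k.length → ℕ, ∑' m : S, Φ (m, n) := Summable.tsum_prod' hΦswap hfib2
      _ = ∑' n : Fin k.length → ℕ,
            (∏ i, ((K i + n i - 1).choose (n i) : ℝ))
              * mzv (List.ofFn fun i => K i + n i) * (-t) ^ (∑ i, n i) :=
          tsum_congr hinner
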